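/- Let Λ ⊂ ℤ and f ∈ H_Λ with ‖f‖₂ = 1. Then there is an absolute constant C such that for every interval I ⊂ 𝕋, ∫_I |f(ξ)|² dξ ≤ C·ℓ(I)·D_Λ(ℓ(I)^{-1}), where ℓ(I) is the length of I and D_Λ(x) = sup_{t∈ℝ}|Λ ∩ [t,t+x]|. -/

import Mathlib

open MeasureTheory Complex
open scoped ENNReal Real

instance : Fact ((0:ℝ) < 1) := ⟨one_pos⟩

lemma measurableSet_image_Ico (t l : ℝ) (hl1 : l ≤ 1) :
    MeasurableSet ((fun x : ℝ => (x : AddCircle (1:ℝ))) '' Set.Ico t (t + l)) := by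
  have hset : ((fun x : ℝ => (x : AddCircle (1:ℝ))) '' Set.Ico t (t + l)) =
      (AddCircle.measurableEquivIco (1:ℝ) t) ⁻¹'
        ((fun p : Set.Ico t (t+1) => (p : ℝ)) ⁻¹' Set.Ico t (t + l)) := by
    ext y
    constructor
    · rintro ⟨v, hv, rfl⟩
      have hv1 : v ∈ Set.Ico t (t + 1) := ⟨hv.1, lt_of_lt_of_le hv.2 (by linarith)⟩
      have h2 : (AddCircle.equivIco 1 t) ((v : AddCircle (1:ℝ))) = ⟨v, hv1⟩ := by
        rw [Equiv.apply_eq_iff_eq_symm_apply]; rfl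
      show ((AddCircle.equivIco 1 t) _ : ℝ) ∈ Set.Ico t (t+l)
      rw [h2]; exact hv
    · intro hy
      refine ⟨((AddCircle.equivIco 1 t) y : ℝ), hy, ?_⟩
      exact ((AddCircle.equivIco 1 t).symm_apply_apply y)
  rw [hset]
  exact (AddCircle.measurableEquivIco 1 t).measurable
    (measurable_subtype_coe measurableSet_Ico)

lemma fourier_pt_add {T : ℝ} [hT : Fact (0 < T)] (n : ℤ) (x y : AddCircle T) :
    fourier n (x + y) = fourier n x * fourier n y := by
  rw [fourier_apply, fourier_apply, fourier_apply, smul_add, AddCircle.toCircle_add]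
  simp

lemma norm_fourier_pt {T : ℝ} [hT : Fact (0 < T)] (n : ℤ) (x : AddCircle T) :
    ‖fourier n x‖ = 1 := by
  rw [fourier_apply]
  exact Circle.norm_coe _

lemma norm_sq_sum_orthonormal {ι E : Type*} [NormedAddCommGroup E] [InnerProductSpace ℂ E]
    {v : ι → E} (hv : Orthonormal ℂ v) (c : ι → ℂ) (s : Finset ι) :
    ‖∑ i ∈ s, c i • v i‖ ^ 2 = ∑ i ∈ s, ‖c i‖ ^ 2 := by
  have h2 := inner_self_eq_norm_sq (𝕜 := ℂ) (∑ i ∈ s, c i • v i)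
  rw [hv.inner_sum c c s, map_sum] at h2
  rw [← h2]
  apply Finset.sum_congr rfl
  intro i _
  rw [mul_comm, Complex.mul_conj]
  simp [Complex.normSq_eq_norm_sq, ← Complex.ofReal_pow]

lemma dirichlet_lower {N : ℕ} (hN : 1 ≤ N) {u : ℝ} (hu : |u| * ((N : ℝ) - 1) ≤ 4⁻¹) :
    (N : ℝ) / 2 ≤ ‖∑ j ∈ Finset.range N, fourier (j : ℤ) ((u : ℝ) : AddCircle (1:ℝ))‖ := by
  set z : ℂ := Complex.exp ((-(π * ((N:ℝ) - 1) * u) : ℝ) * Complex.I) with hz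
  have hznorm : ‖z‖ = 1 := by
    rw [hz, Complex.norm_exp]
    simp
  have key : ∀ j ∈ Finset.range N, (1:ℝ)/2 ≤ (z * fourier (j:ℤ) ((u : ℝ) : AddCircle (1:ℝ))).re := by
    intro j hj
    rw [Finset.mem_range] at hj
    have hfour : fourier (j:ℤ) ((u:ℝ) : AddCircle (1:ℝ))
        = Complex.exp ((2 * π * j * u : ℝ) * Complex.I) := by
      rw [fourier_coe_apply]
      push_cast
      congr 1
      ring
    have hmul : z * fourier (j:ℤ) ((u:ℝ) : AddCircle (1:ℝ))
        = Complex.exp ((π * (2*(j:ℝ) - ((N:ℝ)-1)) * u : ℝ) * Complex.I) := by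
      rw [hfour, hz, ← Complex.exp_add]
      congr 1
      push_cast
      ring
    rw [hmul, Complex.exp_ofReal_mul_I_re]
    set θ : ℝ := π * (2*(j:ℝ) - ((N:ℝ)-1)) * u with hθ
    have hjN : (j:ℝ) ≤ (N:ℝ) - 1 := by
      have : (j:ℝ) + 1 ≤ (N:ℝ) := by exact_mod_cast Nat.succ_le_of_lt hj
      linarith
    have hj0 : (0:ℝ) ≤ (j:ℝ) := Nat.cast_nonneg j
    have hd : |2*(j:ℝ) - ((N:ℝ)-1)| ≤ (N:ℝ) - 1 := by
      rw [abs_le]; constructor <;> linarith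
    have habs : |θ| ≤ 1 := by
      have h1 : |θ| = π * (|2*(j:ℝ) - ((N:ℝ)-1)| * |u|) := by
        rw [hθ, abs_mul, abs_mul, abs_of_pos Real.pi_pos, mul_assoc]
      have h2 : |2*(j:ℝ) - ((N:ℝ)-1)| * |u| ≤ ((N:ℝ)-1) * |u| :=
        mul_le_mul_of_nonneg_right hd (abs_nonneg u)
      have h3 : ((N:ℝ)-1) * |u| ≤ 4⁻¹ := by rw [mul_comm]; exact hu
      have h4 : π ≤ 4 := Real.pi_le_four
      have h5 : 0 ≤ ((N:ℝ)-1) * |u| := by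
        have : (1:ℝ) ≤ (N:ℝ) := by exact_mod_cast hN
        have := abs_nonneg u
        nlinarith
      calc |θ| = π * (|2*(j:ℝ) - ((N:ℝ)-1)| * |u|) := h1
        _ ≤ 4 * 4⁻¹ := by
            apply mul_le_mul h4 (h2.trans h3) _ (by norm_num)
            exact mul_nonneg (abs_nonneg _) (abs_nonneg _)
        _ = 1 := by norm_num
    have hcos := Real.one_sub_sq_div_two_le_cos (x := θ)
    nlinarith [_root_.sq_abs θ, abs_nonneg θ]
  have hre : ((N:ℝ))/2 ≤ (z * ∑ j ∈ Finset.range N, fourier (j:ℤ) ((u:ℝ) : AddCircle (1:ℝ))).re := by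
    rw [Finset.mul_sum, Complex.re_sum]
    calc (N:ℝ)/2 = ∑ _j ∈ Finset.range N, (1:ℝ)/2 := by
          rw [Finset.sum_const, Finset.card_range]
          ring
      _ ≤ _ := Finset.sum_le_sum key
  calc (N:ℝ)/2 ≤ (z * ∑ j ∈ Finset.range N, fourier (j:ℤ) ((u:ℝ) : AddCircle (1:ℝ))).re := hre
    _ ≤ ‖(z * ∑ j ∈ Finset.range N, fourier (j:ℤ) ((u:ℝ) : AddCircle (1:ℝ)))‖ :=
        Complex.re_le_norm _
    _ = ‖∑ j ∈ Finset.range N, fourier (j:ℤ) ((u:ℝ) : AddCircle (1:ℝ))‖ := by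
        rw [norm_mul, hznorm, one_mul]

/-- Haar (Lebesgue) probability measure on the circle `𝕋 = ℝ/ℤ`. -/
noncomputable def μT : Measure (AddCircle (1:ℝ)) := AddCircle.haarAddCircle

instance : IsProbabilityMeasure μT :=
  inferInstanceAs (IsProbabilityMeasure AddCircle.haarAddCircle)

instance : IsFiniteMeasure μT :=
  inferInstanceAs (IsFiniteMeasure AddCircle.haarAddCircle)

set_option maxHeartbeats 2000000 in
/-- `H_Λ`: the closed linear span in `L²(𝕋)` of the characters `e^{2πinξ}`, `n ∈ Λ`. -/
noncomputable def HLam (Λ : Set ℤ) : Submodule ℂ (Lp ℂ 2 μT) :=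
  (Submodule.span ℂ ((fun n : ℤ => (fourierLp 2 n : Lp ℂ 2 μT)) '' Λ)).topologicalClosure

/-- `D_Λ(x) = sup_{t∈ℝ} |Λ ∩ [t, t+x]|` for `Λ ⊆ ℤ` (as an extended count). -/
noncomputable def DLamZ (Λ : Set ℤ) (x : ℝ) : ℝ≥0∞ :=
  ⨆ t : ℝ, (((fun n : ℤ => (n : ℝ)) '' Λ ∩ Set.Icc t (t + x)).encard : ℝ≥0∞)

set_option maxHeartbeats 2000000 in
lemma core (Λ : Set ℤ) (t l : ℝ) (hl0 : 0 < l) (hl1 : l ≤ 1) {D : ℝ} (hD0 : 0 ≤ D)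
    (hD : ∀ a : ℝ, (((fun n : ℤ => (n : ℝ)) '' Λ ∩ Set.Icc a (a + l⁻¹)).encard : ℝ≥0∞)
        ≤ ENNReal.ofReal D)
    (g : Lp ℂ 2 μT)
    (hg : g ∈ Submodule.span ℂ ((fun n : ℤ => (fourierLp 2 n : Lp ℂ 2 μT)) '' Λ)) :
    ∫ ξ in ((fun x : ℝ => (x : AddCircle (1:ℝ))) '' Set.Ico t (t + l)), ‖g ξ‖ ^ 2 ∂μT
      ≤ 16 * l * D * ‖g‖ ^ 2 := by
  classical
  have hg := (Finsupp.mem_span_image_iff_linearCombination (R := ℂ)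
    (M := Lp ℂ 2 AddCircle.haarAddCircle)).mp hg
  obtain ⟨c, hsuppmem, hrep⟩ := hg
  have hsupp : ↑c.support ⊆ Λ := Finsupp.mem_supported ℂ c |>.mp hsuppmem
  set s : Finset ℤ := c.support with hs
  have hgsum : g = ∑ n ∈ s, c n • (fourierLp 2 n : Lp ℂ 2 μT) := by
    rw [← hrep]; rfl
  -- the integer N
  set N : ℕ := max 1 ⌊1/(2*l)⌋₊ with hN
  have hN1 : 1 ≤ N := le_max_left _ _
  have hN0 : (0:ℝ) < N := by exact_mod_cast Nat.lt_of_lt_of_le Nat.zero_lt_one hN1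
  have hNne : (N:ℝ) ≠ 0 := ne_of_gt hN0
  have h2l0 : (0:ℝ) < 1/(2*l) := by positivity
  have hNup : (N:ℝ) ≤ 1/(2*l) + 1 := by
    rw [hN]
    push_cast
    exact max_le (by linarith) ((Nat.floor_le h2l0.le).trans (by linarith))
  have hNm1 : (N:ℝ) - 1 ≤ 1/(2*l) := by linarith
  have h4lN : (1:ℝ) ≤ 4 * l * N := by
    rcases le_or_gt (1:ℝ) (4*l) with h|h
    · have h1 : (1:ℝ) ≤ (N:ℝ) := by exact_mod_cast hN1
      nlinarith
    · have hfl : 1/(2*l) - 1 ≤ (⌊1/(2*l)⌋₊:ℝ) := by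
        have := Nat.lt_floor_add_one (1/(2*l)); linarith
      have hNf : (⌊1/(2*l)⌋₊:ℝ) ≤ (N:ℝ) := by
        rw [hN]; push_cast; exact le_max_right _ _
      have hl' : 4 * l * (1/(2*l) - 1) = 2 - 4*l := by field_simp; ring
      nlinarith
  have hNl : (N:ℝ) - 1 ≤ l⁻¹ := by
    have h12 : 1/(2*l) ≤ 1/l := one_div_le_one_div_of_le hl0 (by linarith)
    rw [← one_div l]
    linarith
  -- continuous maps
  set ctr : ℝ := t + l/2 with hctr
  set G : C(AddCircle (1:ℝ), ℂ) := ∑ n ∈ s, c n • fourier n with hG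
  set w : ℕ × ℤ → ℂ := fun p => fourier (p.1:ℤ) ((-ctr : ℝ) : AddCircle (1:ℝ)) * c p.2 with hw
  set Hc : C(AddCircle (1:ℝ), ℂ) :=
    ∑ p ∈ Finset.range N ×ˢ s, w p • fourier ((p.1:ℤ) + p.2) with hHc
  have hGg : ContinuousMap.toLp (E := ℂ) 2 μT ℂ G = g := by
    rw [hgsum, hG, map_sum]
    exact Finset.sum_congr rfl fun n _ => by rw [_root_.map_smul]; rfl
  have hG_ae : ⇑g =ᵐ[μT] ⇑G := by
    rw [← hGg]; exact G.coeFn_toLp (p := 2) (𝕜 := ℂ) μT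
  have hGx : ∀ x, G x = ∑ n ∈ s, c n * fourier n x := by
    intro x; rw [hG]; simp
  have hHx : ∀ x, Hc x =
      (∑ j ∈ Finset.range N, fourier (j:ℤ) (x + ((-ctr : ℝ) : AddCircle (1:ℝ)))) * G x := by
    intro x
    rw [Finset.sum_mul]
    have hL : Hc x = ∑ j ∈ Finset.range N, ∑ n ∈ s, w (j, n) * fourier ((j:ℤ)+n) x := by
      rw [hHc]; simp [Finset.sum_product]
    rw [hL]
    refine Finset.sum_congr rfl fun j _ => ?_
    rw [hGx, Finset.mul_sum]
    refine Finset.sum_congr rfl fun n _ => ?_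
    rw [fourier_pt_add, fourier_add, hw]
    ring
  have hHLp : ContinuousMap.toLp (E := ℂ) 2 μT ℂ Hc
      = ∑ p ∈ Finset.range N ×ˢ s, w p • (fourierLp 2 ((p.1:ℤ) + p.2) : Lp ℂ 2 μT) := by
    rw [hHc, map_sum]
    exact Finset.sum_congr rfl fun p _ => by rw [_root_.map_smul]; rfl
  -- regrouping
  set T2 : Finset ℤ := (Finset.range N ×ˢ s).image (fun p => (p.1:ℤ) + p.2) with hT2
  set F : ℤ → Finset (ℕ × ℤ) :=
    fun k => (Finset.range N ×ˢ s).filter (fun p => (p.1:ℤ) + p.2 = k) with hF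
  set a : ℤ → ℂ := fun k => ∑ p ∈ F k, w p with ha
  have hregroup : ∑ p ∈ Finset.range N ×ˢ s, w p • (fourierLp 2 ((p.1:ℤ)+p.2) : Lp ℂ 2 μT)
      = ∑ k ∈ T2, a k • (fourierLp 2 k : Lp ℂ 2 μT) := by
    rw [← Finset.sum_fiberwise_of_maps_to (g := fun p : ℕ × ℤ => (p.1:ℤ)+p.2)
      (fun p hp => Finset.mem_image_of_mem _ hp)
      (f := fun p => w p • (fourierLp 2 ((p.1:ℤ)+p.2) : Lp ℂ 2 μT))]
    refine Finset.sum_congr rfl fun k hk => ?_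
    rw [ha, Finset.sum_smul]
    refine Finset.sum_congr rfl fun p hp => ?_
    rw [(Finset.mem_filter.mp hp).2]
  have hHnorm : ‖ContinuousMap.toLp (E := ℂ) 2 μT ℂ Hc‖^2 = ∑ k ∈ T2, ‖a k‖^2 := by
    rw [hHLp, hregroup]
    exact norm_sq_sum_orthonormal orthonormal_fourier a T2
  -- fiber cardinality bound
  have hcard : ∀ k : ℤ, ((F k).card : ℝ) ≤ D := by
    intro k
    set U : Finset ℤ := (F k).image Prod.snd with hU
    have hinj : Set.InjOn (Prod.snd : ℕ × ℤ → ℤ) ↑(F k) := by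
      intro p hp q hq hpq
      have hp' := (Finset.mem_filter.mp hp).2
      have hq' := (Finset.mem_filter.mp hq).2
      have h1 : (p.1:ℤ) = (q.1:ℤ) := by omega
      have h2 : p.1 = q.1 := by exact_mod_cast h1
      exact Prod.ext h2 hpq
    have hcards : (F k).card = U.card := (Finset.card_image_of_injOn hinj).symm
    have hsub : ((fun n : ℤ => (n:ℝ)) '' ↑U) ⊆
        ((fun n : ℤ => (n : ℝ)) '' Λ ∩
          Set.Icc ((k:ℝ) - ((N:ℝ)-1)) (((k:ℝ) - ((N:ℝ)-1)) + l⁻¹)) := by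
      rintro - ⟨n, hn, rfl⟩
      obtain ⟨p, hp, rfl⟩ := Finset.mem_image.mp (Finset.mem_coe.mp hn)
      have hp' := Finset.mem_filter.mp hp
      have hps := Finset.mem_product.mp hp'.1
      have hj : p.1 < N := Finset.mem_range.mp hps.1
      have hns : p.2 ∈ s := hps.2
      have hk : (p.1:ℤ) + p.2 = k := hp'.2
      have h1 : (p.1:ℝ) ≤ (N:ℝ) - 1 := by
        have : (p.1:ℝ) + 1 ≤ (N:ℝ) := by exact_mod_cast Nat.succ_le_of_lt hj
        linarith
      have h2 : (p.2:ℝ) = (k:ℝ) - (p.1:ℝ) := by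
        have : ((p.1:ℤ):ℝ) + ((p.2:ℤ):ℝ) = ((k:ℤ):ℝ) := by exact_mod_cast congrArg Int.cast hk
        push_cast at this ⊢
        linarith
      have h3 : (0:ℝ) ≤ (p.1:ℝ) := Nat.cast_nonneg _
      refine ⟨⟨p.2, hsupp hns, rfl⟩, ?_⟩
      simp only [Set.mem_Icc]
      constructor <;> linarith
    have hence := Set.encard_mono hsub
    rw [Set.InjOn.encard_image (Int.cast_injective.injOn), Set.encard_coe_eq_coe_finsetCard]
      at hence
    have h2 : ((U.card : ℕ∞) : ℝ≥0∞) ≤ ENNReal.ofReal D :=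
      le_trans (by exact_mod_cast hence) (hD _)
    have h3 : ((U.card : ℕ) : ℝ≥0∞) ≤ ENNReal.ofReal D := by exact_mod_cast h2
    rw [← ENNReal.ofReal_natCast, ENNReal.ofReal_le_ofReal_iff hD0] at h3
    rw [hcards]; exact h3
  -- Schur-type bound
  have hak : ∀ k ∈ T2, ‖a k‖^2 ≤ D * ∑ p ∈ F k, ‖c p.2‖^2 := by
    intro k _
    have h1 : ‖a k‖ ≤ ∑ p ∈ F k, ‖c p.2‖ := by
      rw [ha]
      refine (norm_sum_le _ _).trans (Finset.sum_le_sum fun p _ => ?_)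
      rw [hw, norm_mul, norm_fourier_pt, one_mul]
    have h2 : (∑ p ∈ F k, ‖c p.2‖)^2 ≤ (F k).card * ∑ p ∈ F k, ‖c p.2‖^2 :=
      sq_sum_le_card_mul_sum_sq
    have h3 : (0:ℝ) ≤ ∑ p ∈ F k, ‖c p.2‖^2 :=
      Finset.sum_nonneg fun p _ => by positivity
    have h4 := hcard k
    have h5 : (0:ℝ) ≤ ‖a k‖ := norm_nonneg _
    calc ‖a k‖^2 ≤ (∑ p ∈ F k, ‖c p.2‖)^2 := pow_le_pow_left₀ h5 h1 2
      _ ≤ (F k).card * ∑ p ∈ F k, ‖c p.2‖^2 := h2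
      _ ≤ D * ∑ p ∈ F k, ‖c p.2‖^2 := mul_le_mul_of_nonneg_right h4 h3
  have htot : ∑ k ∈ T2, ∑ p ∈ F k, ‖c p.2‖^2 = (N:ℝ) * ∑ n ∈ s, ‖c n‖^2 := by
    rw [Finset.sum_fiberwise_of_maps_to (fun p hp => Finset.mem_image_of_mem _ hp)]
    rw [Finset.sum_product]
    have hcon : ∀ x ∈ Finset.range N, ∑ y ∈ s, ‖c (x, y).2‖^2 = ∑ n ∈ s, ‖c n‖^2 :=
      fun x _ => rfl
    rw [Finset.sum_congr rfl hcon, Finset.sum_const, Finset.card_range, nsmul_eq_mul]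
  have hsum0 : (0:ℝ) ≤ ∑ n ∈ s, ‖c n‖^2 := Finset.sum_nonneg fun n _ => by positivity
  have hHle : ‖ContinuousMap.toLp (E := ℂ) 2 μT ℂ Hc‖^2 ≤ D * ((N:ℝ) * ∑ n ∈ s, ‖c n‖^2) := by
    rw [hHnorm, ← htot, Finset.mul_sum]
    exact Finset.sum_le_sum hak
  have hgnorm : ‖g‖^2 = ∑ n ∈ s, ‖c n‖^2 := by
    rw [hgsum]; exact norm_sq_sum_orthonormal orthonormal_fourier _ s
  -- integral estimates
  set S : Set (AddCircle (1:ℝ)) := (fun x : ℝ => (x : AddCircle (1:ℝ))) '' Set.Ico t (t + l)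
    with hSdef
  have hSm : MeasurableSet S := measurableSet_image_Ico t l hl1
  have hGint : Integrable (fun x => ‖G x‖^2) μT :=
    Continuous.integrable_of_hasCompactSupport ((G.continuous.norm).pow 2)
      (HasCompactSupport.of_compactSpace _)
  have hHcint : Integrable (fun x => ‖Hc x‖^2) μT :=
    Continuous.integrable_of_hasCompactSupport ((Hc.continuous.norm).pow 2)
      (HasCompactSupport.of_compactSpace _)
  have hpt : ∀ x ∈ S, ‖G x‖^2 ≤ (2/(N:ℝ))^2 * ‖Hc x‖^2 := by
    rintro x ⟨v, hv, rfl⟩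
    have hcoe : ((v:ℝ) : AddCircle (1:ℝ)) + ((-ctr : ℝ) : AddCircle (1:ℝ))
        = ((v - ctr : ℝ) : AddCircle (1:ℝ)) := by
      norm_cast
    have hu : |v - ctr| * ((N:ℝ)-1) ≤ 4⁻¹ := by
      have h1 : |v - ctr| ≤ l/2 := by
        rw [hctr, abs_le]
        constructor
        · linarith [hv.1]
        · linarith [hv.2]
      have h2 : (0:ℝ) ≤ (N:ℝ) - 1 := by
        have : (1:ℝ) ≤ (N:ℝ) := by exact_mod_cast hN1
        linarith
      calc |v - ctr| * ((N:ℝ)-1) ≤ (l/2) * (1/(2*l)) :=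
            mul_le_mul h1 hNm1 h2 (by positivity)
        _ = 4⁻¹ := by field_simp; ring
    have hdir := dirichlet_lower hN1 hu
    have hfact := hHx ((v:ℝ) : AddCircle (1:ℝ))
    rw [hcoe] at hfact
    have hG0 := norm_nonneg (G ((v:ℝ) : AddCircle (1:ℝ)))
    have hmain : (N:ℝ)/2 * ‖G ((v:ℝ) : AddCircle (1:ℝ))‖ ≤ ‖Hc ((v:ℝ) : AddCircle (1:ℝ))‖ := by
      rw [hfact, norm_mul]
      exact mul_le_mul_of_nonneg_right hdir hG0
    have hsq : ((N:ℝ)/2 * ‖G ((v:ℝ) : AddCircle (1:ℝ))‖)^2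
        ≤ ‖Hc ((v:ℝ) : AddCircle (1:ℝ))‖^2 :=
      pow_le_pow_left₀ (by positivity) hmain 2
    calc ‖G ((v:ℝ) : AddCircle (1:ℝ))‖^2
        = (2/(N:ℝ))^2 * ((N:ℝ)/2 * ‖G ((v:ℝ) : AddCircle (1:ℝ))‖)^2 := by
          field_simp
      _ ≤ (2/(N:ℝ))^2 * ‖Hc ((v:ℝ) : AddCircle (1:ℝ))‖^2 :=
          mul_le_mul_of_nonneg_left hsq (by positivity)
  have hstep1 : ∫ ξ in S, ‖g ξ‖^2 ∂μT = ∫ ξ in S, ‖G ξ‖^2 ∂μT := by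
    apply integral_congr_ae
    filter_upwards [ae_restrict_of_ae hG_ae] with x hx
    rw [hx]
  have hstep2 : ∫ ξ in S, ‖G ξ‖^2 ∂μT ≤ ∫ ξ in S, (2/(N:ℝ))^2 * ‖Hc ξ‖^2 ∂μT :=
    setIntegral_mono_on hGint.integrableOn (hHcint.const_mul _).integrableOn hSm hpt
  have hstep3 : ∫ ξ in S, (2/(N:ℝ))^2 * ‖Hc ξ‖^2 ∂μT ≤ ∫ ξ, (2/(N:ℝ))^2 * ‖Hc ξ‖^2 ∂μT :=
    setIntegral_le_integral (hHcint.const_mul _) (ae_of_all _ fun x => by positivity)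
  have hintHc : Integrable (fun x => (starRingEnd ℂ) (Hc x) * Hc x) μT :=
    Continuous.integrable_of_hasCompactSupport
      ((Complex.continuous_conj.comp Hc.continuous).mul Hc.continuous)
      (HasCompactSupport.of_compactSpace _)
  have hstep4 : ∫ ξ, (2/(N:ℝ))^2 * ‖Hc ξ‖^2 ∂μT
      = (2/(N:ℝ))^2 * ‖ContinuousMap.toLp (E := ℂ) 2 μT ℂ Hc‖^2 := by
    rw [MeasureTheory.integral_const_mul]
    congr 1
    have hinner := ContinuousMap.inner_toLp (𝕜 := ℂ) μT Hc Hc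
    have h2 := inner_self_eq_norm_sq (𝕜 := ℂ) (ContinuousMap.toLp (E := ℂ) 2 μT ℂ Hc)
    rw [hinner] at h2
    rw [← h2, ← integral_re (by simpa only [mul_comm] using hintHc)]
    have hre : ∀ z : ℂ, RCLike.re ((starRingEnd ℂ) z * z) = ‖z‖^2 := fun z => by
      rw [mul_comm, Complex.mul_conj]
      simp [Complex.normSq_eq_norm_sq, ← Complex.ofReal_pow]
    exact integral_congr_ae (ae_of_all _ fun x => by beta_reduce; rw [mul_comm]; exact (hre (Hc x)).symm)
  have h16 : 4/(N:ℝ) ≤ 16 * l := by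
    rw [div_le_iff₀ hN0]
    nlinarith
  have hDs : (0:ℝ) ≤ D * ∑ n ∈ s, ‖c n‖^2 := mul_nonneg hD0 hsum0
  calc ∫ ξ in S, ‖g ξ‖^2 ∂μT
      = ∫ ξ in S, ‖G ξ‖^2 ∂μT := hstep1
    _ ≤ ∫ ξ in S, (2/(N:ℝ))^2 * ‖Hc ξ‖^2 ∂μT := hstep2
    _ ≤ (2/(N:ℝ))^2 * ‖ContinuousMap.toLp (E := ℂ) 2 μT ℂ Hc‖^2 := hstep3.trans_eq hstep4
    _ ≤ (2/(N:ℝ))^2 * (D * ((N:ℝ) * ∑ n ∈ s, ‖c n‖^2)) :=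
        mul_le_mul_of_nonneg_left hHle (by positivity)
    _ = (4/(N:ℝ)) * (D * ∑ n ∈ s, ‖c n‖^2) := by field_simp; ring
    _ ≤ 16 * l * (D * ∑ n ∈ s, ‖c n‖^2) := mul_le_mul_of_nonneg_right h16 hDs
    _ = 16 * l * D * ‖g‖^2 := by rw [hgnorm]; ring

set_option maxHeartbeats 2000000 in
lemma closure_step (Λ : Set ℤ) (t l : ℝ) (hl0 : 0 < l) (hl1 : l ≤ 1) {D : ℝ} (hD0 : 0 ≤ D)
    (hD : ∀ a : ℝ, (((fun n : ℤ => (n : ℝ)) '' Λ ∩ Set.Icc a (a + l⁻¹)).encard : ℝ≥0∞)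
        ≤ ENNReal.ofReal D)
    (f : Lp ℂ 2 μT) (hf : f ∈ HLam Λ) :
    ∫ ξ in ((fun x : ℝ => (x : AddCircle (1:ℝ))) '' Set.Ico t (t + l)), ‖f ξ‖ ^ 2 ∂μT
      ≤ 16 * l * D * ‖f‖ ^ 2 := by
  classical
  set S : Set (AddCircle (1:ℝ)) := (fun x : ℝ => (x : AddCircle (1:ℝ))) '' Set.Ico t (t + l)
    with hSdef
  set nf : Lp ℂ 2 μT → ℝ := fun h => (eLpNorm (⇑h) 2 (μT.restrict S)).toReal with hnfdef
  have hfin : ∀ h : Lp ℂ 2 μT, eLpNorm (⇑h) 2 (μT.restrict S) ≠ ⊤ := fun h =>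
    ((eLpNorm_mono_measure _ Measure.restrict_le_self).trans_lt (Lp.eLpNorm_lt_top h)).ne
  have hnf_eq : ∀ h : Lp ℂ 2 μT, ∫ ξ in S, ‖h ξ‖ ^ 2 ∂μT = (nf h) ^ 2 := by
    intro h
    have hmem : MemLp (⇑h) 2 (μT.restrict S) := (Lp.memLp h).restrict S
    have h2 := hmem.eLpNorm_eq_integral_rpow_norm two_ne_zero ENNReal.ofNat_ne_top
    set I : ℝ := ∫ a in S, ‖h a‖ ^ ((2:ℝ≥0∞).toReal) ∂μT with hI
    have hIpos : 0 ≤ I :=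
      integral_nonneg fun a => Real.rpow_nonneg (norm_nonneg _) _
    have hIeq : ∫ ξ in S, ‖h ξ‖ ^ 2 ∂μT = I := by
      rw [hI]
      refine integral_congr_ae (ae_of_all _ fun a => ?_)
      have h22 : ((2:ℝ≥0∞)).toReal = ((2:ℕ):ℝ) := by simp
      simp [h22, Real.rpow_natCast]
    have hnfh : nf h = I ^ ((2:ℝ≥0∞).toReal⁻¹) := by
      show (eLpNorm (⇑h) 2 (μT.restrict S)).toReal = _
      rw [h2, ENNReal.toReal_ofReal (Real.rpow_nonneg hIpos _)]
    rw [hIeq, hnfh, ← Real.rpow_natCast (I ^ ((2:ℝ≥0∞).toReal⁻¹)) 2, ← Real.rpow_mul hIpos]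
    norm_num
  have hnf_lip : ∀ h₁ h₂ : Lp ℂ 2 μT, nf h₁ ≤ nf h₂ + ‖h₁ - h₂‖ := by
    intro h₁ h₂
    have hae : ⇑h₁ =ᵐ[μT.restrict S] ⇑h₂ + (⇑(h₁ - h₂)) := by
      filter_upwards [ae_restrict_of_ae (Lp.coeFn_sub h₁ h₂)] with x hx
      rw [Pi.add_apply, hx, Pi.sub_apply]
      ring
    have tri : eLpNorm (⇑h₁) 2 (μT.restrict S)
        ≤ eLpNorm (⇑h₂) 2 (μT.restrict S) + eLpNorm (⇑(h₁ - h₂)) 2 (μT.restrict S) := by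
      rw [eLpNorm_congr_ae hae]
      exact eLpNorm_add_le ((Lp.aestronglyMeasurable h₂).restrict)
        ((Lp.aestronglyMeasurable (h₁ - h₂)).restrict) one_le_two
    have hsub : eLpNorm (⇑(h₁ - h₂)) 2 (μT.restrict S) ≤ ENNReal.ofReal ‖h₁ - h₂‖ := by
      refine (eLpNorm_mono_measure _ Measure.restrict_le_self).trans ?_
      rw [Lp.norm_def, ENNReal.ofReal_toReal (Lp.eLpNorm_ne_top _)]
    calc nf h₁ ≤ ((eLpNorm (⇑h₂) 2 (μT.restrict S)) + ENNReal.ofReal ‖h₁ - h₂‖).toReal := by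
          apply ENNReal.toReal_mono
          · exact ENNReal.add_ne_top.mpr ⟨hfin h₂, ENNReal.ofReal_ne_top⟩
          · exact tri.trans (add_le_add le_rfl hsub)
      _ = nf h₂ + ‖h₁ - h₂‖ := by
          rw [ENNReal.toReal_add (hfin h₂) ENNReal.ofReal_ne_top,
            ENNReal.toReal_ofReal (norm_nonneg _)]
  have hnf_cont : Continuous nf := by
    have hlip : LipschitzWith 1 nf := by
      apply LipschitzWith.of_dist_le_mul
      intro h₁ h₂
      rw [NNReal.coe_one, one_mul, Real.dist_eq, dist_eq_norm]
      rw [abs_sub_le_iff]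
      constructor
      · have := hnf_lip h₁ h₂; linarith
      · have := hnf_lip h₂ h₁
        rw [norm_sub_rev] at this
        linarith
    exact hlip.continuous
  have hclosed : IsClosed {h : Lp ℂ 2 μT | (nf h)^2 ≤ 16 * l * D * ‖h‖^2} :=
    isClosed_le (hnf_cont.pow 2) (continuous_const.mul (continuous_norm.pow 2))
  let V : Submodule ℂ (Lp ℂ 2 μT) :=
    Submodule.span ℂ ((fun n : ℤ => (fourierLp 2 n : Lp ℂ 2 μT)) '' Λ)
  have hsubset : (V : Set (Lp ℂ 2 μT)) ⊆
      {h : Lp ℂ 2 μT | (nf h)^2 ≤ 16 * l * D * ‖h‖^2} := by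
    intro g hg
    have h1 := core Λ t l hl0 hl1 hD0 hD g hg
    rwa [hnf_eq g] at h1
  have hfc : f ∈ closure (V : Set (Lp ℂ 2 μT)) := by
    rw [← Submodule.topologicalClosure_coe]
    exact hf
  have hfin2 := closure_minimal hsubset hclosed hfc
  rw [hnf_eq f]
  exact hfin2

/-- Lemma 5.1: there is an absolute constant `C` so that for every `Λ ⊆ ℤ`, every
`f ∈ H_Λ` with `‖f‖ = 1` and every interval `I ⊆ 𝕋` of length `ℓ(I) = l`,
`∫_I |f(ξ)|² dξ ≤ C·ℓ(I)·D_Λ(ℓ(I)⁻¹)`. -/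
theorem integral_on_interval_le_density :
    ∃ C : ℝ, 0 < C ∧
      ∀ (Λ : Set ℤ) (f : Lp ℂ 2 μT), f ∈ HLam Λ → ‖f‖ = 1 →
        ∀ t l : ℝ, 0 < l → l ≤ 1 →
          ENNReal.ofReal
              (∫ ξ in ((fun x : ℝ => (x : AddCircle (1:ℝ))) '' Set.Ico t (t + l)),
                ‖f ξ‖ ^ 2 ∂μT) ≤
            ENNReal.ofReal (C * l) * DLamZ Λ l⁻¹ := by
  refine ⟨16, by norm_num, ?_⟩
  intro Λ f hf hnorm t l hl0 hl1
  by_cases hDtop : DLamZ Λ l⁻¹ = ⊤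
  · rw [hDtop, ENNReal.mul_top]
    · exact le_top
    · rw [Ne, ENNReal.ofReal_eq_zero, not_le]
      positivity
  · set Dv : ℝ := (DLamZ Λ l⁻¹).toReal with hDv
    have hD0 : 0 ≤ Dv := ENNReal.toReal_nonneg
    have hDa : ∀ a : ℝ, (((fun n : ℤ => (n : ℝ)) '' Λ ∩ Set.Icc a (a + l⁻¹)).encard : ℝ≥0∞)
        ≤ ENNReal.ofReal Dv := by
      intro a
      rw [hDv, ENNReal.ofReal_toReal hDtop]
      exact le_iSup (fun b : ℝ =>
        (((fun n : ℤ => (n : ℝ)) '' Λ ∩ Set.Icc b (b + l⁻¹)).encard : ℝ≥0∞)) a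
    have hmain := closure_step Λ t l hl0 hl1 hD0 hDa f hf
    rw [hnorm] at hmain
    calc ENNReal.ofReal (∫ ξ in ((fun x : ℝ => (x : AddCircle (1:ℝ))) '' Set.Ico t (t + l)),
            ‖f ξ‖ ^ 2 ∂μT)
        ≤ ENNReal.ofReal (16 * l * Dv) := ENNReal.ofReal_le_ofReal (by simpa using hmain)
      _ = ENNReal.ofReal (16 * l) * ENNReal.ofReal Dv := ENNReal.ofReal_mul (by positivity)
      _ = ENNReal.ofReal (16 * l) * DLamZ Λ l⁻¹ := by rw [hDv, ENNReal.ofReal_toReal hDtop]
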